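/- Let ε > 0 and t ≥ 0, and set ρ(y) = exp(y²/(8(1+t/ε))) for y > 0. If f : (0,∞) → ℂ is continuously differentiable, ρ∂_y f ∈ L²(0,∞), ρf and yρf belong to L²(0,∞), and y ρ(y)²|f(y)|² → 0 as y → ∞ and as y → 0⁺, then ‖ρf‖²_{L²(0,∞)} + (1/(4(1+t/ε))) ‖yρf‖²_{L²(0,∞)} ≤ 4(1+t/ε) ‖ρ∂_y f‖²_{L²(0,∞)}. -/

import Mathlib

open MeasureTheory Set Filter

noncomputable section

/-- Gaussian weight `ρ(y) = exp(y²/(8(1+t/ε)))`. -/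
def rho (ε t y : ℝ) : ℝ := Real.exp (y ^ 2 / (8 * (1 + t / ε)))

private lemma norm_sq_complex (z : ℂ) : ‖z‖ ^ 2 = z.re ^ 2 + z.im ^ 2 := by
  rw [Complex.sq_norm, Complex.normSq_apply]; ring

private lemma quad_bound (c K y u v u' v' r : ℝ) (hr : 0 ≤ r) (hc : 0 < c)
    (hcK : c * (4 * K) = 1) :
    |2 * y * r * (u * u' + v * v')| ≤
      c * (y ^ 2 * r * (u ^ 2 + v ^ 2)) + 4 * K * (r * (u' ^ 2 + v' ^ 2)) := by
  have h4K : 4 * K = 1 / c := by field_simp at hcK ⊢; linarith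
  rw [abs_le]
  constructor
  · have e : c * (y ^ 2 * r * (u ^ 2 + v ^ 2)) + 4 * K * (r * (u' ^ 2 + v' ^ 2))
        + 2 * y * r * (u * u' + v * v')
        = (1 / c) * (r * (c * y * u + u') ^ 2 + r * (c * y * v + v') ^ 2) := by
      rw [h4K]; field_simp; ring
    have pos : 0 ≤ (1 / c) * (r * (c * y * u + u') ^ 2 + r * (c * y * v + v') ^ 2) := by
      positivity
    linarith
  · have e : c * (y ^ 2 * r * (u ^ 2 + v ^ 2)) + 4 * K * (r * (u' ^ 2 + v' ^ 2))
        - 2 * y * r * (u * u' + v * v')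
        = (1 / c) * (r * (c * y * u - u') ^ 2 + r * (c * y * v - v') ^ 2) := by
      rw [h4K]; field_simp; ring
    have pos : 0 ≤ (1 / c) * (r * (c * y * u - u') ^ 2 + r * (c * y * v - v') ^ 2) := by
      positivity
    linarith

/-- **Weighted Poincaré/Hardy inequality** (Lemma 4.1 of the paper):
`‖ρf‖²_{L²(0,∞)} + (1/(4(1+t/ε))) ‖yρf‖²_{L²(0,∞)} ≤ 4(1+t/ε) ‖ρ∂_y f‖²_{L²(0,∞)}`. -/
theorem weighted_poincare_hardy
    (ε t : ℝ) (hε : 0 < ε) (ht : 0 ≤ t)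
    (f : ℝ → ℂ)
    (hf : ContDiffOn ℝ 1 f (Ioi 0))
    (hderiv : IntegrableOn (fun y => (rho ε t y) ^ 2 * ‖deriv f y‖ ^ 2) (Ioi 0))
    (hL2 : IntegrableOn (fun y => (rho ε t y) ^ 2 * ‖f y‖ ^ 2) (Ioi 0))
    (hyL2 : IntegrableOn (fun y => y ^ 2 * (rho ε t y) ^ 2 * ‖f y‖ ^ 2) (Ioi 0))
    (hvanish_top : Tendsto (fun y => y * (rho ε t y) ^ 2 * ‖f y‖ ^ 2) atTop (nhds 0))
    (hvanish_zero : Tendsto (fun y => y * (rho ε t y) ^ 2 * ‖f y‖ ^ 2)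
      (nhdsWithin 0 (Ioi 0)) (nhds 0)) :
    (∫ y in Ioi (0 : ℝ), (rho ε t y) ^ 2 * ‖f y‖ ^ 2)
      + (1 / (4 * (1 + t / ε))) * ∫ y in Ioi (0 : ℝ), y ^ 2 * (rho ε t y) ^ 2 * ‖f y‖ ^ 2
      ≤ 4 * (1 + t / ε) * ∫ y in Ioi (0 : ℝ), (rho ε t y) ^ 2 * ‖deriv f y‖ ^ 2 := by
  have hKpos : (0 : ℝ) < 1 + t / ε := by positivity
  set K : ℝ := 1 + t / ε with hKdef
  set c : ℝ := 1 / (4 * K) with hcdef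
  have hc0 : 0 < c := by positivity
  have hcK : c * (4 * K) = 1 := by
    rw [hcdef]; field_simp
  -- basic facts about f
  have hfd : ∀ y ∈ Ioi (0 : ℝ), HasDerivAt f (deriv f y) y := fun y hy =>
    ((hf.differentiableOn one_ne_zero).differentiableAt (isOpen_Ioi.mem_nhds hy)).hasDerivAt
  have hfc : ContinuousOn f (Ioi 0) := hf.continuousOn
  have hfdc : ContinuousOn (deriv f) (Ioi 0) :=
    hf.continuousOn_deriv_of_isOpen isOpen_Ioi le_rfl
  have hrpos : ∀ y : ℝ, 0 < rho ε t y := fun y => Real.exp_pos _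
  -- derivative of the weight squared
  have hW : ∀ y : ℝ, HasDerivAt (fun z => rho ε t z ^ 2) (y / (2 * K) * rho ε t y ^ 2) y := by
    intro y
    have h1 : HasDerivAt (fun z : ℝ => z ^ 2 / (8 * K)) (2 * y / (8 * K)) y := by
      simpa using (hasDerivAt_pow 2 y).div_const (8 * K)
    have h2 := h1.exp.fun_pow 2
    have hrho : ∀ z : ℝ, rho ε t z = Real.exp (z ^ 2 / (8 * K)) := by
      intro z; rw [rho, ← hKdef]
    simp only [hrho]
    refine h2.congr_deriv ?_
    generalize Real.exp (y ^ 2 / (8 * K)) = e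
    have h8 : (8 : ℝ) * K ≠ 0 := by positivity
    have h2K : (2 : ℝ) * K ≠ 0 := by positivity
    field_simp
    ring
  -- derivative of ‖f‖²
  have hN : ∀ y ∈ Ioi (0 : ℝ), HasDerivAt (fun z => ‖f z‖ ^ 2)
      (2 * ((f y).re * (deriv f y).re + (f y).im * (deriv f y).im)) y := by
    intro y hy
    have hfy := hfd y hy
    have hre : HasDerivAt (fun z => (f z).re) ((deriv f y).re) y := by
      have := Complex.reCLM.hasFDerivAt.comp_hasDerivAt y hfy
      simp only [Function.comp_def, Complex.reCLM_apply] at this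
      exact this
    have him : HasDerivAt (fun z => (f z).im) ((deriv f y).im) y := by
      have := Complex.imCLM.hasFDerivAt.comp_hasDerivAt y hfy
      simp only [Function.comp_def, Complex.imCLM_apply] at this
      exact this
    have heq : (fun z => ‖f z‖ ^ 2) = fun z => (f z).re ^ 2 + (f z).im ^ 2 :=
      funext fun z => norm_sq_complex (f z)
    rw [heq]
    refine ((hre.fun_pow 2).add (him.fun_pow 2)).congr_deriv ?_
    push_cast
    ring
  -- the function G and its derivative g'
  set G : ℝ → ℝ := fun y => y * rho ε t y ^ 2 * ‖f y‖ ^ 2 with hGdef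
  set g' : ℝ → ℝ := fun y => rho ε t y ^ 2 * ‖f y‖ ^ 2
      + (1 / (2 * K)) * (y ^ 2 * rho ε t y ^ 2 * ‖f y‖ ^ 2)
      + 2 * y * rho ε t y ^ 2
          * ((f y).re * (deriv f y).re + (f y).im * (deriv f y).im) with hg'def
  have hG : ∀ y ∈ Ioi (0 : ℝ), HasDerivAt G (g' y) y := by
    intro y hy
    have := ((hasDerivAt_id y).fun_mul (hW y)).fun_mul (hN y hy)
    refine this.congr_deriv ?_
    have h2K : (2 : ℝ) * K ≠ 0 := by positivity
    simp only [hg'def]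
    field_simp
    simp only [id_eq]
    ring
  -- pointwise bound on the cross term
  have key : ∀ y : ℝ,
      ‖2 * y * rho ε t y ^ 2 * ((f y).re * (deriv f y).re + (f y).im * (deriv f y).im)‖
        ≤ c * (y ^ 2 * rho ε t y ^ 2 * ‖f y‖ ^ 2)
          + 4 * K * (rho ε t y ^ 2 * ‖deriv f y‖ ^ 2) := by
    intro y
    rw [Real.norm_eq_abs, norm_sq_complex (f y), norm_sq_complex (deriv f y)]
    exact quad_bound c K y (f y).re (f y).im (deriv f y).re (deriv f y).im
      (rho ε t y ^ 2) (by positivity) hc0 hcK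
  -- integrability of the cross term
  have hcrossmeas : AEStronglyMeasurable
      (fun y => 2 * y * rho ε t y ^ 2
        * ((f y).re * (deriv f y).re + (f y).im * (deriv f y).im))
      (volume.restrict (Ioi (0 : ℝ))) := by
    apply ContinuousOn.aestronglyMeasurable _ measurableSet_Ioi
    have hrc : Continuous fun y : ℝ => rho ε t y ^ 2 := by
      have : Continuous fun y : ℝ => Real.exp (y ^ 2 / (8 * K)) := by fun_prop
      simpa [rho] using this.fun_pow 2
    exact (((continuous_const.mul continuous_id).continuousOn.mul
      hrc.continuousOn)).mul
      (((Complex.continuous_re.comp_continuousOn hfc).mul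
        (Complex.continuous_re.comp_continuousOn hfdc)).add
       ((Complex.continuous_im.comp_continuousOn hfc).mul
        (Complex.continuous_im.comp_continuousOn hfdc)))
  have hbndint : IntegrableOn (fun y =>
      c * (y ^ 2 * rho ε t y ^ 2 * ‖f y‖ ^ 2)
        + 4 * K * (rho ε t y ^ 2 * ‖deriv f y‖ ^ 2)) (Ioi 0) :=
    (hyL2.const_mul c).add (hderiv.const_mul (4 * K))
  have hcrossint : IntegrableOn (fun y => 2 * y * rho ε t y ^ 2
      * ((f y).re * (deriv f y).re + (f y).im * (deriv f y).im)) (Ioi 0) :=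
    Integrable.mono' hbndint hcrossmeas (ae_of_all _ key)
  have hg'int : IntegrableOn g' (Ioi 0) :=
    ((hL2.add (hyL2.const_mul (1 / (2 * K)))).add hcrossint)
  -- ∫ g' over (0,∞) equals 0, via FTC on an exhausting family
  have hzero : (∫ y in Ioi (0 : ℝ), g' y) = 0 := by
    set φ : ℕ → Set ℝ := fun n => Ioc (1 / ((n : ℝ) + 1)) (n : ℝ) with hφdef
    have hφsub : ∀ n, φ n ⊆ Ioi (0 : ℝ) := by
      intro n x hx
      have : (0 : ℝ) < 1 / ((n : ℝ) + 1) := by positivity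
      exact lt_trans this hx.1
    have h1n : Tendsto (fun n : ℕ => 1 / ((n : ℝ) + 1)) atTop (nhds 0) :=
      tendsto_one_div_add_atTop_nhds_zero_nat
    have hcast : Tendsto (fun n : ℕ => (n : ℝ)) atTop atTop := tendsto_natCast_atTop_atTop
    have hφ : AECover (volume.restrict (Ioi (0 : ℝ))) atTop φ := by
      constructor
      · filter_upwards [ae_restrict_mem measurableSet_Ioi] with x hx
        have h1 : ∀ᶠ n : ℕ in atTop, 1 / ((n : ℝ) + 1) < x :=
          h1n.eventually (eventually_lt_nhds hx)
        have h2 : ∀ᶠ n : ℕ in atTop, x ≤ (n : ℝ) := hcast.eventually_ge_atTop x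
        filter_upwards [h1, h2] with n hn1 hn2
        exact ⟨hn1, hn2⟩
      · intro n; exact measurableSet_Ioc
    apply hφ.integral_eq_of_tendsto 0 hg'int
    have hres : ∀ n : ℕ, (∫ y in φ n, g' y ∂(volume.restrict (Ioi (0 : ℝ))))
        = ∫ y in φ n, g' y := by
      intro n
      rw [Measure.restrict_restrict (hφ.measurableSet n), inter_eq_left.mpr (hφsub n)]
    have hFTC : (fun n : ℕ => ∫ y in φ n, g' y ∂(volume.restrict (Ioi (0 : ℝ))))
        =ᶠ[atTop] fun n : ℕ => G (n : ℝ) - G (1 / ((n : ℝ) + 1)) := by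
      filter_upwards [eventually_ge_atTop 1] with n hn
      have hab : 1 / ((n : ℝ) + 1) ≤ (n : ℝ) := by
        have h1 : (1 : ℝ) ≤ (n : ℝ) := by exact_mod_cast hn
        have : 1 / ((n : ℝ) + 1) ≤ 1 := by
          rw [div_le_one (by positivity)]; linarith
        linarith
      have hsub : uIcc (1 / ((n : ℝ) + 1)) (n : ℝ) ⊆ Ioi 0 := by
        rw [uIcc_of_le hab]
        intro x hx
        have : (0 : ℝ) < 1 / ((n : ℝ) + 1) := by positivity
        exact lt_of_lt_of_le this hx.1
      rw [hres n, ← intervalIntegral.integral_of_le hab]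
      exact intervalIntegral.integral_eq_sub_of_hasDerivAt
        (fun x hx => hG x (hsub hx))
        ((hg'int.mono_set hsub).intervalIntegrable)
    have hlim : Tendsto (fun n : ℕ => G (n : ℝ) - G (1 / ((n : ℝ) + 1))) atTop (nhds 0) := by
      have hGa : Tendsto (fun n : ℕ => G (1 / ((n : ℝ) + 1))) atTop (nhds 0) := by
        apply hvanish_zero.comp
        rw [tendsto_nhdsWithin_iff]
        exact ⟨h1n, Eventually.of_forall fun n => mem_Ioi.mpr (by positivity)⟩
      have hGb : Tendsto (fun n : ℕ => G (n : ℝ)) atTop (nhds 0) :=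
        hvanish_top.comp hcast
      simpa using hGb.sub hGa
    exact Tendsto.congr' hFTC.symm hlim
  -- pointwise inequality H ≤ g'
  set H : ℝ → ℝ := fun y => rho ε t y ^ 2 * ‖f y‖ ^ 2
      + c * (y ^ 2 * rho ε t y ^ 2 * ‖f y‖ ^ 2)
      - 4 * K * (rho ε t y ^ 2 * ‖deriv f y‖ ^ 2) with hHdef
  have hHle : ∀ y ∈ Ioi (0 : ℝ), H y ≤ g' y := by
    intro y _
    have hk := key y
    rw [Real.norm_eq_abs] at hk
    have hneg := neg_abs_le (2 * y * rho ε t y ^ 2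
      * ((f y).re * (deriv f y).re + (f y).im * (deriv f y).im))
    have h2c : (1 : ℝ) / (2 * K) = 2 * c := by
      rw [hcdef]
      field_simp
      ring
    simp only [hHdef, hg'def, h2c]
    have hy2 : 0 ≤ y ^ 2 * rho ε t y ^ 2 * ‖f y‖ ^ 2 := by positivity
    nlinarith [hk, hneg, mul_nonneg hc0.le hy2]
  have hHint : IntegrableOn H (Ioi 0) :=
    (hL2.add (hyL2.const_mul c)).sub (hderiv.const_mul (4 * K))
  have hmono : (∫ y in Ioi (0 : ℝ), H y) ≤ ∫ y in Ioi (0 : ℝ), g' y :=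
    setIntegral_mono_on hHint hg'int measurableSet_Ioi hHle
  have hHint_eq : (∫ y in Ioi (0 : ℝ), H y)
      = (∫ y in Ioi (0 : ℝ), rho ε t y ^ 2 * ‖f y‖ ^ 2)
        + c * (∫ y in Ioi (0 : ℝ), y ^ 2 * rho ε t y ^ 2 * ‖f y‖ ^ 2)
        - 4 * K * (∫ y in Ioi (0 : ℝ), rho ε t y ^ 2 * ‖deriv f y‖ ^ 2) := by
    have hmul1 : IntegrableOn (fun y => c * (y ^ 2 * rho ε t y ^ 2 * ‖f y‖ ^ 2)) (Ioi 0) :=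
      hyL2.const_mul c
    have hmul2 : IntegrableOn (fun y => 4 * K * (rho ε t y ^ 2 * ‖deriv f y‖ ^ 2)) (Ioi 0) :=
      hderiv.const_mul (4 * K)
    have hsum : IntegrableOn (fun y => rho ε t y ^ 2 * ‖f y‖ ^ 2
        + c * (y ^ 2 * rho ε t y ^ 2 * ‖f y‖ ^ 2)) (Ioi 0) := hL2.add hmul1
    rw [hHdef]
    rw [integral_sub hsum hmul2, integral_add hL2 hmul1, integral_const_mul, integral_const_mul]
  rw [hzero, hHint_eq] at hmono
  linarith
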